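/- Let n ≥ 6 and let 𝒮₇ be a primitive nonpowerful signed digraph whose underlying digraph is F₇, in which all cycles of length n−1 have the same sign and all cycles of length n−2 have the same sign. Then l_{𝒮₇}(k) = l_{𝒮₇}(v_k) = 2n²−8n+7+k for every 1 ≤ k ≤ n. -/

import Mathlib

/-- `f : ℕ → V` traces a directed walk of length `t` in the digraph with
adjacency relation `A` if consecutive vertices are joined by arcs. -/
def IsWalk {V : Type*} (A : V → V → Prop) (t : ℕ) (f : ℕ → V) : Prop :=
  ∀ i < t, A (f i) (f (i + 1))

/-- There is a directed walk of length `t` from `u` to `v`. -/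
def HasWalk {V : Type*} (A : V → V → Prop) (t : ℕ) (u v : V) : Prop :=
  ∃ f : ℕ → V, f 0 = u ∧ f t = v ∧ IsWalk A t f

/-- A digraph is strongly connected if every vertex can reach every vertex. -/
def StronglyConnected {V : Type*} (A : V → V → Prop) : Prop :=
  ∀ u v : V, ∃ t : ℕ, HasWalk A t u v

/-- A digraph is primitive if it is strongly connected and for some `t > 0`
there are directed walks of length `t` between every ordered pair of vertices. -/
def IsPrimitive {V : Type*} (A : V → V → Prop) : Prop :=
  StronglyConnected A ∧ ∃ t : ℕ, 0 < t ∧ ∀ u v : V, HasWalk A t u v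

/-- The local exponent at `u`: the least `l` such that for every `t ≥ l` and
every vertex `v` there is a directed walk of length `t` from `u` to `v`. -/
noncomputable def localExp {V : Type*} (A : V → V → Prop) (u : V) : ℕ :=
  sInf {l : ℕ | ∀ t ≥ l, ∀ v : V, HasWalk A t u v}

/-- `kthSmallest f k` is the `k`-th smallest element (1-indexed) of the
multiset of values of `f`. -/
noncomputable def kthSmallest {n : ℕ} (f : Fin n → ℕ) (k : ℕ) : ℕ :=
  (Multiset.sort (Finset.univ.val.map f) (· ≤ ·)).getD (k - 1) 0

/-- A directed cycle of length `c` (a closed walk whose first `c` vertices are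
pairwise distinct), given by its vertex function. -/
def IsCycle {V : Type*} (A : V → V → Prop) (c : ℕ) (f : ℕ → V) : Prop :=
  IsWalk A c f ∧ f c = f 0 ∧ ∀ i < c, ∀ j < c, f i = f j → i = j

/-- A signed digraph: each arc carries a sign `+1` or `-1`. -/
structure SignedDigraph (V : Type*) where
  Adj : V → V → Prop
  sgn : V → V → ℤ
  sgn_unit : ∀ u v : V, Adj u v → sgn u v = 1 ∨ sgn u v = -1

namespace SignedDigraph

variable {V : Type*} (S : SignedDigraph V)

/-- The sign of the walk of length `t` traced by `f`. -/
def walkSign (t : ℕ) (f : ℕ → V) : ℤ :=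
  ∏ i ∈ Finset.range t, S.sgn (f i) (f (i + 1))

/-- There is a pair of SSSD walks of length `t` from `u` to `v`: two walks with
the same endpoints and the same length but different signs. -/
def HasSSSD (t : ℕ) (u v : V) : Prop :=
  ∃ f g : ℕ → V,
    (f 0 = u ∧ f t = v ∧ IsWalk S.Adj t f) ∧
    (g 0 = u ∧ g t = v ∧ IsWalk S.Adj t g) ∧
    S.walkSign t f ≠ S.walkSign t g

/-- A signed digraph is primitive and nonpowerful if from some length on there
are SSSD walk pairs between all ordered pairs of vertices. -/
def IsPrimitiveNonpowerful : Prop :=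
  ∃ l : ℕ, 0 < l ∧ ∀ t ≥ l, ∀ u v : V, S.HasSSSD t u v

/-- The local base at vertex `u`: the least `l` such that for every `t ≥ l` and
every vertex `v` there is a pair of SSSD walks of length `t` from `u` to `v`. -/
noncomputable def localBase (u : V) : ℕ :=
  sInf {l : ℕ | ∀ t ≥ l, ∀ v : V, S.HasSSSD t u v}

/-- All directed cycles of length `c` in `S` have the same sign. -/
def SameSignCycles (c : ℕ) : Prop :=
  ∀ f g : ℕ → V, IsCycle S.Adj c f → IsCycle S.Adj c g →
    S.walkSign c f = S.walkSign c g

end SignedDigraph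

/-- Isomorphism of digraphs. -/
def DigraphIso {V W : Type*} (A : V → V → Prop) (B : W → W → Prop) : Prop :=
  ∃ e : V ≃ W, ∀ u v : V, A u v ↔ B (e u) (e v)

/-- The Hamilton cycle `Cₙ` on `v₁,…,vₙ` (here `vⱼ` is the vertex with 0-based
index `j-1`), with arcs `v₁ → vₙ` and `vⱼ → v_{j-1}` for `2 ≤ j ≤ n`. -/
def CnAdj (n : ℕ) : Fin n → Fin n → Prop := fun a b =>
  (a.val = 0 ∧ b.val = n - 1) ∨ a.val = b.val + 1

/-- The digraph `D_{k,i}`: the Hamilton cycle `Cₙ` together with the arcs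
`vⱼ → v_{n-k+j-1}` for `1 ≤ j ≤ i`. -/
def DkiAdj (n k i : ℕ) : Fin n → Fin n → Prop := fun a b =>
  CnAdj n a b ∨ ∃ j : ℕ, 1 ≤ j ∧ j ≤ i ∧ a.val = j - 1 ∧ b.val = n - k + j - 2

/-- The digraph `𝓛`: `Cₙ` together with the arcs `v₁ → v_{n-2}` and `v₃ → vₙ`. -/
def LAdj (n : ℕ) : Fin n → Fin n → Prop := fun a b =>
  CnAdj n a b ∨ (a.val = 0 ∧ b.val = n - 3) ∨ (a.val = 2 ∧ b.val = n - 1)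

/-- The digraph `F`: the `(n-1)`-cycle `v₁ → vₙ → v_{n-1} → v_{n-3} → ⋯ → v₂ → v₁`
together with the arcs `v₁ → v_{n-2}` and `v_{n-2} → v_{n-3}`. -/
def FAdj (n : ℕ) : Fin n → Fin n → Prop := fun a b =>
  (a.val = 0 ∧ b.val = n - 1) ∨ (a.val = n - 1 ∧ b.val = n - 2) ∨
  (a.val = n - 2 ∧ b.val = n - 4) ∨ (a.val = b.val + 1 ∧ 1 ≤ a.val ∧ a.val ≤ n - 4) ∨
  (a.val = 0 ∧ b.val = n - 3) ∨ (a.val = n - 3 ∧ b.val = n - 4)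

/-- The digraph `F₁`: the `(n-1)`-cycle `v₁ → v_{n-1} → v_{n-2} → ⋯ → v₂ → v₁`
together with the arcs `v₁ → v_{n-2}`, `v₂ → vₙ` and `vₙ → v_{n-1}`. -/
def F1Adj (n : ℕ) : Fin n → Fin n → Prop := fun a b =>
  (a.val = 0 ∧ b.val = n - 2) ∨ (a.val = b.val + 1 ∧ 1 ≤ a.val ∧ a.val ≤ n - 2) ∨
  (a.val = 0 ∧ b.val = n - 3) ∨ (a.val = 1 ∧ b.val = n - 1) ∨ (a.val = n - 1 ∧ b.val = n - 2)

/-- The digraph `F₂`: the `(n-1)`-cycle `v₁ → vₙ → v_{n-2} → v_{n-3} → ⋯ → v₂ → v₁`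
together with the arcs `v₁ → v_{n-2}`, `vₙ → v_{n-1}` and `v_{n-1} → v_{n-3}`. -/
def F2Adj (n : ℕ) : Fin n → Fin n → Prop := fun a b =>
  (a.val = 0 ∧ b.val = n - 1) ∨ (a.val = n - 1 ∧ b.val = n - 3) ∨
  (a.val = b.val + 1 ∧ 1 ≤ a.val ∧ a.val ≤ n - 3) ∨
  (a.val = 0 ∧ b.val = n - 3) ∨ (a.val = n - 1 ∧ b.val = n - 2) ∨ (a.val = n - 2 ∧ b.val = n - 4)

/-- The digraph `F₃`: the `(n-2)`-cycle `v₁ → v_{n-2} → v_{n-3} → ⋯ → v₂ → v₁`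
together with the arcs `v₁ → v_{n-1}`, `v_{n-1} → v_{n-2}`, `v₁ → vₙ` and `vₙ → v_{n-2}`. -/
def F3Adj (n : ℕ) : Fin n → Fin n → Prop := fun a b =>
  (a.val = 0 ∧ b.val = n - 3) ∨ (a.val = b.val + 1 ∧ 1 ≤ a.val ∧ a.val ≤ n - 3) ∨
  (a.val = 0 ∧ b.val = n - 2) ∨ (a.val = n - 2 ∧ b.val = n - 3) ∨
  (a.val = 0 ∧ b.val = n - 1) ∨ (a.val = n - 1 ∧ b.val = n - 3)

/-- The digraph `F₇`: the `(n-1)`-cycle `v₁ → v_{n-1} → v_{n-2} → ⋯ → v₂ → v₁`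
together with the arcs `v₁ → v_{n-2}`, `v₃ → vₙ` and `vₙ → v_{n-1}`. -/
def F7Adj (n : ℕ) : Fin n → Fin n → Prop := fun a b =>
  (a.val = 0 ∧ b.val = n - 2) ∨ (a.val = b.val + 1 ∧ 1 ≤ a.val ∧ a.val ≤ n - 2) ∨
  (a.val = 0 ∧ b.val = n - 3) ∨ (a.val = 2 ∧ b.val = n - 1) ∨ (a.val = n - 1 ∧ b.val = n - 2)

/-- The digraph `F'ᵢ` (for `2 ≤ i ≤ n-3`): the `(n-1)`-cycle
`v₁ → v_{n-1} → v_{n-2} → ⋯ → v₂ → v₁` together with the arcs `v₁ → v_{n-2}`,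
`v_{i+1} → vₙ` and `vₙ → v_{i-1}`. -/
def FpAdj (n i : ℕ) : Fin n → Fin n → Prop := fun a b =>
  (a.val = 0 ∧ b.val = n - 2) ∨ (a.val = b.val + 1 ∧ 1 ≤ a.val ∧ a.val ≤ n - 2) ∨
  (a.val = 0 ∧ b.val = n - 3) ∨ (a.val = i ∧ b.val = n - 1) ∨ (a.val = n - 1 ∧ b.val = i - 2)

/-- The digraph `𝓑₁`: `Cₙ` together with the arcs `v₁ → v_{n-3}` and `v₃ → v_{n-1}`. -/
def B1Adj (n : ℕ) : Fin n → Fin n → Prop := fun a b =>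
  CnAdj n a b ∨ (a.val = 0 ∧ b.val = n - 4) ∨ (a.val = 2 ∧ b.val = n - 2)

/-- The digraph `𝓑₂`: `Cₙ` together with the arcs `v₁ → v_{n-3}` and `v₄ → vₙ`. -/
def B2Adj (n : ℕ) : Fin n → Fin n → Prop := fun a b =>
  CnAdj n a b ∨ (a.val = 0 ∧ b.val = n - 4) ∨ (a.val = 3 ∧ b.val = n - 1)

/-- The digraph `𝓑₃`: `Cₙ` together with the arcs `v₁ → v_{n-3}`, `v₂ → v_{n-2}`
and `v₄ → vₙ`. -/
def B3Adj (n : ℕ) : Fin n → Fin n → Prop := fun a b =>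
  CnAdj n a b ∨ (a.val = 0 ∧ b.val = n - 4) ∨ (a.val = 1 ∧ b.val = n - 3) ∨
  (a.val = 3 ∧ b.val = n - 1)

/-- The digraph `𝓑₄`: `Cₙ` together with the arcs `v₁ → v_{n-3}`, `v₃ → v_{n-1}`
and `v₄ → vₙ`. -/
def B4Adj (n : ℕ) : Fin n → Fin n → Prop := fun a b =>
  CnAdj n a b ∨ (a.val = 0 ∧ b.val = n - 4) ∨ (a.val = 2 ∧ b.val = n - 2) ∨
  (a.val = 3 ∧ b.val = n - 1)

open Fin.NatCast

namespace S7

lemma fin_val_cast {n : ℕ} [NeZero n] {j : ℕ} (h : j < n) : ((j : Fin n)).val = j := by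
  simp [Fin.val_natCast, Nat.mod_eq_of_lt h]

variable {n : ℕ} [NeZero n] (S : SignedDigraph (Fin n))

/-- gauge along the descending chain -/
def d (j : ℕ) : ℤ := ∏ i ∈ Finset.range j, S.sgn (↑(i+1)) (↑i)

def s1 : ℤ := S.sgn (↑(0:ℕ)) (↑(n-2)) * d S (n-2)
def s2 : ℤ := S.sgn (↑(0:ℕ)) (↑(n-3)) * d S (n-3)
def gl : ℤ := S.sgn (↑(n-1)) (↑(n-2)) * d S (n-2)
def g (v : Fin n) : ℤ := if v.val = n-1 then gl S else d S v.val

lemma d_zero : d S 0 = 1 := Finset.prod_range_zero _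

lemma d_succ (j : ℕ) : d S (j+1) = d S j * S.sgn (↑(j+1)) (↑j) := Finset.prod_range_succ _ _

section adj
variable (hn : 6 ≤ n) (hadj : S.Adj = F7Adj n)
include hn hadj

lemma adj_desc {j : ℕ} (h : j + 1 ≤ n-2) : S.Adj (↑(j+1)) (↑j) := by
  rw [hadj]
  have h1 : ((↑(j+1) : Fin n)).val = j + 1 := fin_val_cast (by omega)
  have h2 : ((↑j : Fin n)).val = j := fin_val_cast (by omega)
  exact Or.inr (Or.inl ⟨by omega, by omega, by omega⟩)

lemma adj_top : S.Adj (↑(0:ℕ)) (↑(n-2)) := by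
  rw [hadj]
  have h1 : ((↑(0:ℕ) : Fin n)).val = 0 := fin_val_cast (by omega)
  have h2 : ((↑(n-2) : Fin n)).val = n-2 := fin_val_cast (by omega)
  exact Or.inl ⟨by omega, by omega⟩

lemma adj_chord : S.Adj (↑(0:ℕ)) (↑(n-3)) := by
  rw [hadj]
  have h1 : ((↑(0:ℕ) : Fin n)).val = 0 := fin_val_cast (by omega)
  have h2 : ((↑(n-3) : Fin n)).val = n-3 := fin_val_cast (by omega)
  exact Or.inr (Or.inr (Or.inl ⟨by omega, by omega⟩))

lemma adj_jump : S.Adj (↑(2:ℕ)) (↑(n-1)) := by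
  rw [hadj]
  have h1 : ((↑(2:ℕ) : Fin n)).val = 2 := fin_val_cast (by omega)
  have h2 : ((↑(n-1) : Fin n)).val = n-1 := fin_val_cast (by omega)
  exact Or.inr (Or.inr (Or.inr (Or.inl ⟨by omega, by omega⟩)))

lemma adj_last : S.Adj (↑(n-1)) (↑(n-2)) := by
  rw [hadj]
  have h1 : ((↑(n-1) : Fin n)).val = n-1 := fin_val_cast (by omega)
  have h2 : ((↑(n-2) : Fin n)).val = n-2 := fin_val_cast (by omega)
  exact Or.inr (Or.inr (Or.inr (Or.inr ⟨by omega, by omega⟩)))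

end adj

lemma sgn_sq {V : Type*} (T : SignedDigraph V) {u v : V} (h : T.Adj u v) :
    T.sgn u v * T.sgn u v = 1 := by
  rcases T.sgn_unit u v h with h' | h' <;> rw [h'] <;> norm_num

section unit
variable (hn : 6 ≤ n) (hadj : S.Adj = F7Adj n)
include hn hadj

lemma d_sq : ∀ {j : ℕ}, j ≤ n-2 → d S j * d S j = 1 := by
  intro j
  induction j with
  | zero => intro _; rw [d_zero]; norm_num
  | succ i ih =>
    intro h
    have hs := sgn_sq S (adj_desc S hn hadj (by omega : i+1 ≤ n-2))
    have hd := ih (by omega)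
    have e : d S (i+1) * d S (i+1) = (d S i * d S i) * (S.sgn (↑(i+1)) (↑i) * S.sgn (↑(i+1)) (↑i)) := by
      rw [d_succ]; ring
    rw [e, hd, hs]; norm_num

lemma s1_sq : s1 S * s1 S = 1 := by
  have hs := sgn_sq S (adj_top S hn hadj)
  have hd := d_sq S hn hadj (le_refl (n-2))
  have e : s1 S * s1 S = (S.sgn (↑(0:ℕ)) (↑(n-2)) * S.sgn (↑(0:ℕ)) (↑(n-2))) * (d S (n-2) * d S (n-2)) := by
    rw [s1]; ring
  rw [e, hd, hs]; norm_num

lemma s2_sq : s2 S * s2 S = 1 := by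
  have hs := sgn_sq S (adj_chord S hn hadj)
  have hd := d_sq S hn hadj (by omega : n-3 ≤ n-2)
  have e : s2 S * s2 S = (S.sgn (↑(0:ℕ)) (↑(n-3)) * S.sgn (↑(0:ℕ)) (↑(n-3))) * (d S (n-3) * d S (n-3)) := by
    rw [s2]; ring
  rw [e, hd, hs]; norm_num

lemma gl_sq : gl S * gl S = 1 := by
  have hs := sgn_sq S (adj_last S hn hadj)
  have hd := d_sq S hn hadj (le_refl (n-2))
  have e : gl S * gl S = (S.sgn (↑(n-1)) (↑(n-2)) * S.sgn (↑(n-1)) (↑(n-2))) * (d S (n-2) * d S (n-2)) := by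
    rw [gl]; ring
  rw [e, hd, hs]; norm_num

lemma g_sq (v : Fin n) : g S v * g S v = 1 := by
  rw [g]
  split
  · exact gl_sq S hn hadj
  · apply d_sq S hn hadj
    have := v.isLt
    omega

end unit

end S7
namespace S7

section walkSign
variable {V : Type*} (T : SignedDigraph V)

lemma ws_zero (f : ℕ → V) : T.walkSign 0 f = 1 := Finset.prod_range_zero _

lemma ws_one (f : ℕ → V) : T.walkSign 1 f = T.sgn (f 0) (f 1) := Finset.prod_range_one _

lemma ws_succ (t : ℕ) (f : ℕ → V) :
    T.walkSign (t+1) f = T.walkSign t f * T.sgn (f t) (f (t+1)) := Finset.prod_range_succ _ _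

lemma ws_succ' (t : ℕ) (f : ℕ → V) :
    T.walkSign (t+1) f = T.sgn (f 0) (f 1) * T.walkSign t (fun i => f (i+1)) := by
  rw [SignedDigraph.walkSign, Finset.prod_range_succ']
  rw [mul_comm]
  rfl

/-- existence of a walk with given endpoints, length and sign -/
def P (t : ℕ) (u v : V) (σ : ℤ) : Prop :=
  ∃ f : ℕ → V, f 0 = u ∧ f t = v ∧ IsWalk T.Adj t f ∧ T.walkSign t f = σ

lemma P.refl (u : V) : P T 0 u u 1 :=
  ⟨fun _ => u, rfl, rfl, fun i hi => absurd hi (Nat.not_lt_zero i), ws_zero T _⟩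

lemma P.step {u v : V} (h : T.Adj u v) : P T 1 u v (T.sgn u v) := by
  refine ⟨fun i => if i = 0 then u else v, by simp, by simp, ?_, by rw [ws_one]; simp⟩
  intro i hi
  have : i = 0 := by omega
  subst this
  simpa using h

lemma P.comp {T : SignedDigraph V} {t1 t2 : ℕ} {u w v : V} {σ1 σ2 : ℤ}
    (h1 : P T t1 u w σ1) (h2 : P T t2 w v σ2) : P T (t1 + t2) u v (σ1 * σ2) := by
  classical
  obtain ⟨f, hf0, hft, hfw, hfs⟩ := h1
  obtain ⟨p, hp0, hpt, hpw, hps⟩ := h2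
  set F : ℕ → V := fun i => if i < t1 then f i else p (i - t1) with hF
  have hFlow : ∀ i ≤ t1, F i = f i := by
    intro i hi
    rcases lt_or_eq_of_le hi with h | h
    · simp [hF, h]
    · subst h
      simp only [hF, lt_irrefl, if_false, Nat.sub_self, hp0, hft]
  have hFhigh : ∀ i, F (t1 + i) = p i := by
    intro i
    have : ¬ (t1 + i < t1) := by omega
    simp only [hF, this, if_false, Nat.add_sub_cancel_left]
  refine ⟨F, ?_, ?_, ?_, ?_⟩
  · rw [hFlow 0 (Nat.zero_le _), hf0]
  · have : t1 + t2 = t1 + t2 := rfl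
    rw [show t1 + t2 = t1 + t2 from rfl, hFhigh t2, hpt]
  · intro i hi
    rcases Nat.lt_or_ge i t1 with h | h
    · rw [hFlow i (le_of_lt h), hFlow (i+1) (by omega)]
      exact hfw i h
    · obtain ⟨j, rfl⟩ : ∃ j, i = t1 + j := ⟨i - t1, by omega⟩
      rw [hFhigh j, show t1 + j + 1 = t1 + (j+1) from by omega, hFhigh (j+1)]
      exact hpw j (by omega)
  · rw [SignedDigraph.walkSign, Finset.prod_range_add]
    have e1 : (∏ i ∈ Finset.range t1, T.sgn (F i) (F (i+1))) = σ1 := by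
      rw [← hfs, SignedDigraph.walkSign]
      apply Finset.prod_congr rfl
      intro i hi
      rw [Finset.mem_range] at hi
      rw [hFlow i (le_of_lt hi), hFlow (i+1) hi]
    have e2 : (∏ i ∈ Finset.range t2, T.sgn (F (t1 + i)) (F (t1 + i + 1))) = σ2 := by
      rw [← hps, SignedDigraph.walkSign]
      apply Finset.prod_congr rfl
      intro i hi
      rw [hFhigh i, show t1 + i + 1 = t1 + (i+1) from by omega, hFhigh (i+1)]
    rw [e1, e2]

end walkSign

section walks
variable {n : ℕ} [NeZero n] (S : SignedDigraph (Fin n)) (hn : 6 ≤ n) (hadj : S.Adj = F7Adj n)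
include hn hadj

lemma desc : ∀ (k b : ℕ), b + k ≤ n-2 → P S k (↑(b+k)) (↑b) (d S (b+k) * d S b) := by
  intro k
  induction k with
  | zero =>
    intro b h
    have hd := d_sq S hn hadj (by omega : b ≤ n-2)
    simpa [hd] using P.refl S (↑b : Fin n)
  | succ k ih =>
    intro b h
    have hstep := P.step S (adj_desc S hn hadj (by omega : (b+k) + 1 ≤ n-2))
    have hrest := ih b (by omega)
    have hcomp := hstep.comp hrest
    have e : d S (b+(k+1)) * d S b = S.sgn (↑(b+k+1)) (↑(b+k)) * (d S (b+k) * d S b) := by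
      rw [show b+(k+1) = (b+k)+1 from by omega, d_succ]; ring
    rw [e, show b+(k+1) = (b+k)+1 from by omega]
    simpa [Nat.add_comm] using hcomp

lemma desc_from (a b : ℕ) (hba : b ≤ a) (ha : a ≤ n-2) :
    P S (a-b) (↑a) (↑b) (d S a * d S b) := by
  have := desc S hn hadj (a-b) b (by omega)
  rw [show b + (a-b) = a from by omega] at this
  exact this

lemma loop1 : P S (n-1) (↑(0:ℕ)) (↑(0:ℕ)) (s1 S) := by
  have hstep := P.step S (adj_top S hn hadj)
  have hrest := desc_from S hn hadj (n-2) 0 (by omega) (le_refl _)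
  have hcomp := hstep.comp hrest
  rw [show (1 + (n-2-0)) = n-1 from by omega] at hcomp
  simpa [s1, d_zero, mul_assoc] using hcomp

lemma loop2 : P S (n-2) (↑(0:ℕ)) (↑(0:ℕ)) (s2 S) := by
  have hstep := P.step S (adj_chord S hn hadj)
  have hrest := desc_from S hn hadj (n-3) 0 (by omega) (by omega)
  have hcomp := hstep.comp hrest
  rw [show (1 + (n-3-0)) = n-2 from by omega] at hcomp
  simpa [s2, d_zero, mul_assoc] using hcomp

lemma pow1 : ∀ a : ℕ, P S (a*(n-1)) (↑(0:ℕ)) (↑(0:ℕ)) (s1 S ^ a) := by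
  intro a
  induction a with
  | zero => simpa using P.refl S ((0:ℕ) : Fin n)
  | succ a ih =>
    have := (loop1 S hn hadj).comp ih
    rw [show (n-1) + a*(n-1) = (a+1)*(n-1) from by ring] at this
    rw [pow_succ, mul_comm (s1 S ^ a) (s1 S)]
    exact this

lemma pow2 : ∀ a : ℕ, P S (a*(n-2)) (↑(0:ℕ)) (↑(0:ℕ)) (s2 S ^ a) := by
  intro a
  induction a with
  | zero => simpa using P.refl S ((0:ℕ) : Fin n)
  | succ a ih =>
    have := (loop2 S hn hadj).comp ih
    rw [show (n-2) + a*(n-2) = (a+1)*(n-2) from by ring] at this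
    rw [pow_succ, mul_comm (s2 S ^ a) (s2 S)]
    exact this

lemma leg1 (v : ℕ) (_hv1 : 1 ≤ v) (hv2 : v ≤ n-2) :
    P S (n-1-v) (↑(0:ℕ)) (↑v) (s1 S * d S v) := by
  have hstep := P.step S (adj_top S hn hadj)
  have hrest := desc_from S hn hadj (n-2) v hv2 (le_refl _)
  have hcomp := hstep.comp hrest
  rw [show (1 + (n-2-v)) = n-1-v from by omega] at hcomp
  simpa [s1, mul_assoc] using hcomp

lemma leg2 (v : ℕ) (hv2 : v ≤ n-3) :
    P S (n-2-v) (↑(0:ℕ)) (↑v) (s2 S * d S v) := by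
  have hstep := P.step S (adj_chord S hn hadj)
  have hrest := desc_from S hn hadj (n-3) v hv2 (by omega)
  have hcomp := hstep.comp hrest
  rw [show (1 + (n-3-v)) = n-2-v from by omega] at hcomp
  simpa [s2, mul_assoc] using hcomp

end walks

end S7
namespace S7

variable {n : ℕ} [NeZero n]

def c2fun (n : ℕ) [NeZero n] : ℕ → Fin n := fun i => if i = 0 then (↑(0:ℕ)) else ↑(n-2-i)
def c2'fun (n : ℕ) [NeZero n] : ℕ → Fin n := fun i => if i < n-2 then ↑(n-1-i) else ↑(n-1)

variable (S : SignedDigraph (Fin n)) (hn : 6 ≤ n) (hadj : S.Adj = F7Adj n)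

lemma prod_desc (m : ℕ) :
    ∏ i ∈ Finset.range m, S.sgn (↑(m-i)) (↑(m-1-i)) = d S m := by
  have h := Finset.prod_range_reflect (fun i => S.sgn ((↑(i+1)) : Fin n) (↑i)) m
  calc ∏ i ∈ Finset.range m, S.sgn (↑(m-i) : Fin n) (↑(m-1-i))
      = ∏ i ∈ Finset.range m, S.sgn ((↑((m-1-i)+1)) : Fin n) (↑(m-1-i)) := by
        apply Finset.prod_congr rfl
        intro i hi
        rw [Finset.mem_range] at hi
        have e1 : m - 1 - i + 1 = m - i := by omega
        rw [e1]
    _ = ∏ i ∈ Finset.range m, S.sgn ((↑(i+1)) : Fin n) (↑i) := h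
    _ = d S m := by rw [d]

include hn

lemma c2fun_val_zero : ((c2fun n 0)).val = 0 := by
  rw [c2fun]
  simp only [if_pos rfl]
  exact fin_val_cast (by omega)

lemma c2fun_val_pos (i : ℕ) (h1 : 1 ≤ i) (h2 : i ≤ n-2) : ((c2fun n i)).val = n-2-i := by
  rw [c2fun]
  rw [if_neg (by omega : ¬ i = 0)]
  exact fin_val_cast (by omega)

lemma c2'fun_val_lt (i : ℕ) (h2 : i < n-2) : ((c2'fun n i)).val = n-1-i := by
  rw [c2'fun]
  rw [if_pos h2]
  exact fin_val_cast (by omega)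

lemma c2'fun_val_ge (i : ℕ) (h2 : n-2 ≤ i) : ((c2'fun n i)).val = n-1 := by
  rw [c2'fun]
  rw [if_neg (by omega : ¬ i < n-2)]
  exact fin_val_cast (by omega)

include hadj

lemma c2_cycle : IsCycle S.Adj (n-2) (c2fun n) := by
  refine ⟨?_, ?_, ?_⟩
  · intro i hi
    rw [hadj]
    by_cases h0 : i = 0
    · subst h0
      have hv1 := c2fun_val_zero (n := n) hn
      have hv2 := c2fun_val_pos (n := n) hn (0+1) (by omega) (by omega)
      exact Or.inr (Or.inr (Or.inl ⟨by omega, by omega⟩))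
    · have hv1 := c2fun_val_pos (n := n) hn i (by omega) (by omega)
      have hv2 := c2fun_val_pos (n := n) hn (i+1) (by omega) (by omega)
      exact Or.inr (Or.inl ⟨by omega, by omega, by omega⟩)
  · apply Fin.ext
    have h1 := c2fun_val_pos (n := n) hn (n-2) (by omega) (le_refl _)
    have h2 := c2fun_val_zero (n := n) hn
    omega
  · intro i hi j hj hij
    have := congrArg Fin.val hij
    by_cases h0i : i = 0 <;> by_cases h0j : j = 0
    · omega
    · subst h0i
      rw [c2fun_val_zero (n := n) hn, c2fun_val_pos (n := n) hn j (by omega) (by omega)] at this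
      omega
    · subst h0j
      rw [c2fun_val_zero (n := n) hn, c2fun_val_pos (n := n) hn i (by omega) (by omega)] at this
      omega
    · rw [c2fun_val_pos (n := n) hn i (by omega) (by omega),
        c2fun_val_pos (n := n) hn j (by omega) (by omega)] at this
      omega

lemma c2'_cycle : IsCycle S.Adj (n-2) (c2'fun n) := by
  refine ⟨?_, ?_, ?_⟩
  · intro i hi
    rw [hadj]
    by_cases h0 : i = 0
    · subst h0
      have hv1 := c2'fun_val_lt (n := n) hn 0 (by omega)
      have hv2 := c2'fun_val_lt (n := n) hn (0+1) (by omega)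
      exact Or.inr (Or.inr (Or.inr (Or.inr ⟨by omega, by omega⟩)))
    · by_cases hlast : i = n-3
      · subst hlast
        have hv1 := c2'fun_val_lt (n := n) hn (n-3) (by omega)
        have hv2 := c2'fun_val_ge (n := n) hn (n-3+1) (by omega)
        exact Or.inr (Or.inr (Or.inr (Or.inl ⟨by omega, by omega⟩)))
      · have hv1 := c2'fun_val_lt (n := n) hn i (by omega)
        have hv2 := c2'fun_val_lt (n := n) hn (i+1) (by omega)
        exact Or.inr (Or.inl ⟨by omega, by omega, by omega⟩)
  · apply Fin.ext
    have h1 := c2'fun_val_ge (n := n) hn (n-2) (le_refl _)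
    have h2 := c2'fun_val_lt (n := n) hn 0 (by omega)
    omega
  · intro i hi j hj hij
    have := congrArg Fin.val hij
    rw [c2'fun_val_lt (n := n) hn i (by omega), c2'fun_val_lt (n := n) hn j (by omega)] at this
    omega

lemma c2_sign : S.walkSign (n-2) (c2fun n) = s2 S := by
  have h := ws_succ' S (n-3) (c2fun n)
  rw [show (n-3) + 1 = n-2 from by omega] at h
  rw [h]
  have hf0 : c2fun n 0 = (↑(0:ℕ) : Fin n) := by
    simp [c2fun]
  have hf1 : c2fun n 1 = (↑(n-3) : Fin n) := by
    rw [c2fun]; rw [if_neg (by omega : ¬ (1:ℕ) = 0)]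
    rw [show n-2-1 = n-3 from by omega]
  have hrest : S.walkSign (n-3) (fun i => c2fun n (i+1)) = d S (n-3) := by
    rw [← prod_desc S (n-3), SignedDigraph.walkSign]
    apply Finset.prod_congr rfl
    intro i hi
    rw [Finset.mem_range] at hi
    have e1 : c2fun n (i+1) = (↑(n-3-i) : Fin n) := by
      rw [c2fun]; rw [if_neg (by omega : ¬ i+1 = 0)]
      rw [show n-2-(i+1) = n-3-i from by omega]
    have e2 : c2fun n (i+1+1) = (↑(n-3-1-i) : Fin n) := by
      rw [c2fun]; rw [if_neg (by omega : ¬ i+1+1 = 0)]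
      rw [show n-2-(i+1+1) = n-3-1-i from by omega]
    rw [e1, e2]
  rw [hf0, hf1, hrest, s2]

lemma c2'_sign :
    S.walkSign (n-2) (c2'fun n) =
      S.sgn (↑(n-1)) (↑(n-2)) *
        (∏ i ∈ Finset.range (n-4), S.sgn (↑(i+3)) (↑(i+2))) * S.sgn (↑(2:ℕ)) (↑(n-1)) := by
  have h := ws_succ S (n-3) (c2'fun n)
  rw [show (n-3) + 1 = n-2 from by omega] at h
  rw [h]
  have hlast1 : c2'fun n (n-3) = (↑(2:ℕ) : Fin n) := by
    rw [c2'fun]; rw [if_pos (by omega)]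
    rw [show n-1-(n-3) = 2 from by omega]
  have hlast2 : c2'fun n (n-2) = (↑(n-1) : Fin n) := by
    rw [c2'fun]; rw [if_neg (by omega : ¬ n-2 < n-2)]
  rw [hlast1, hlast2]
  congr 1
  have h2 := ws_succ' S (n-4) (c2'fun n)
  rw [show (n-4) + 1 = n-3 from by omega] at h2
  rw [h2]
  have hf0 : c2'fun n 0 = (↑(n-1) : Fin n) := by
    rw [c2'fun]; rw [if_pos (by omega)]
    rw [show n-1-0 = n-1 from by omega]
  have hf1 : c2'fun n 1 = (↑(n-2) : Fin n) := by
    rw [c2'fun]; rw [if_pos (by omega)]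
    rw [show n-1-1 = n-2 from by omega]
  rw [hf0, hf1]
  congr 1
  have hrefl := Finset.prod_range_reflect (fun i => S.sgn ((↑(i+3)) : Fin n) (↑(i+2))) (n-4)
  rw [← hrefl, SignedDigraph.walkSign]
  apply Finset.prod_congr rfl
  intro i hi
  rw [Finset.mem_range] at hi
  have e1 : c2'fun n (i+1) = (↑(n-4-1-i+3) : Fin n) := by
    rw [c2'fun]; rw [if_pos (by omega)]
    rw [show n-1-(i+1) = n-4-1-i+3 from by omega]
  have e2 : c2'fun n (i+1+1) = (↑(n-4-1-i+2) : Fin n) := by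
    rw [c2'fun]; rw [if_pos (by omega)]
    rw [show n-1-(i+1+1) = n-4-1-i+2 from by omega]
  rw [e1, e2]

lemma keyEq (h2 : S.SameSignCycles (n-2)) :
    S.sgn (↑(2:ℕ)) (↑(n-1)) * gl S = d S 2 * s2 S := by
  have hcyc := h2 (c2fun n) (c2'fun n) (c2_cycle S hn hadj) (c2'_cycle S hn hadj)
  rw [c2_sign S hn hadj, c2'_sign S hn hadj] at hcyc
  have hsplit : d S (n-2) = d S 2 * ∏ i ∈ Finset.range (n-4), S.sgn (↑(i+3)) (↑(i+2)) := by
    rw [d, show n-2 = 2 + (n-4) from by omega, Finset.prod_range_add]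
    rw [← d]
    congr 1
    apply Finset.prod_congr rfl
    intro i hi
    have e1 : 2 + i + 1 = i + 3 := by omega
    have e2 : 2 + i = i + 2 := by omega
    rw [e1, e2]
  rw [gl, hsplit, hcyc]
  ring

section legs
variable (h2 : S.SameSignCycles (n-2))
include h2

lemma jump_eq : d S 2 * S.sgn (↑(2:ℕ)) (↑(n-1)) = s2 S * gl S := by
  have k := keyEq S hn hadj h2
  have hgl := gl_sq S hn hadj
  have hd2 := d_sq S hn hadj (by omega : 2 ≤ n-2)
  have h1 : S.sgn (↑(2:ℕ)) (↑(n-1)) = d S 2 * s2 S * gl S := by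
    calc S.sgn ((↑(2:ℕ)) : Fin n) (↑(n-1)) = S.sgn ((↑(2:ℕ)) : Fin n) (↑(n-1)) * (gl S * gl S) := by
          rw [hgl]; ring
    _ = (d S 2 * s2 S) * gl S := by rw [← mul_assoc, k]
    _ = d S 2 * s2 S * gl S := by ring
  rw [h1]
  linear_combination (s2 S * gl S) * hd2

lemma legmix : P S (n-2) (↑(0:ℕ)) (↑(n-1)) (s1 S * s2 S * gl S) := by
  have hstep := P.step S (adj_jump S hn hadj)
  have hcomp := (leg1 S hn hadj 2 (by omega) (by omega)).comp hstep
  rw [show (n-1-2) + 1 = n-2 from by omega] at hcomp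
  have e : s1 S * d S 2 * S.sgn (↑(2:ℕ)) (↑(n-1)) = s1 S * s2 S * gl S := by
    rw [mul_assoc, jump_eq S hn hadj h2]; ring
  rw [← e]
  exact hcomp

lemma legpure : P S (n-3) (↑(0:ℕ)) (↑(n-1)) (s2 S * s2 S * gl S) := by
  have hstep := P.step S (adj_jump S hn hadj)
  have hcomp := (leg2 S hn hadj 2 (by omega)).comp hstep
  rw [show (n-2-2) + 1 = n-3 from by omega] at hcomp
  have e : s2 S * d S 2 * S.sgn (↑(2:ℕ)) (↑(n-1)) = s2 S * s2 S * gl S := by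
    rw [mul_assoc, jump_eq S hn hadj h2]; ring
  rw [← e]
  exact hcomp

lemma leg2' : P S (n-2) (↑(0:ℕ)) (↑(n-2)) (s2 S * s2 S * d S (n-2)) := by
  have hstep := P.step S (adj_last S hn hadj)
  have hcomp := (legpure S hn hadj h2).comp hstep
  rw [show (n-3) + 1 = n-2 from by omega] at hcomp
  have e : s2 S * s2 S * gl S * S.sgn (↑(n-1)) (↑(n-2)) = s2 S * s2 S * d S (n-2) := by
    rw [gl]
    linear_combination (s2 S * s2 S * d S (n-2)) * sgn_sq S (adj_last S hn hadj)
  rw [← e]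
  exact hcomp

end legs

lemma desc_any (u : Fin n) : P S u.val u (↑(0:ℕ)) (g S u) := by
  by_cases h : u.val = n-1
  · have hu : u = (↑(n-1) : Fin n) := by
      apply Fin.ext; rw [fin_val_cast (by omega)]; exact h
    have hstep := P.step S (adj_last S hn hadj)
    have hrest := desc_from S hn hadj (n-2) 0 (by omega) (le_refl _)
    have hcomp := hstep.comp hrest
    rw [show (1 + (n-2-0)) = n-1 from by omega] at hcomp
    rw [hu, g]
    rw [fin_val_cast (by omega : n-1 < n), if_pos rfl, gl]
    simpa [d_zero, mul_assoc] using hcomp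
  · have hle : u.val ≤ n-2 := by have := u.isLt; omega
    have hrest := desc_from S hn hadj u.val 0 (by omega) hle
    rw [Nat.sub_zero, Fin.cast_val_eq_self] at hrest
    rw [g, if_neg h]
    simpa [d_zero] using hrest

end S7
namespace S7

variable {n : ℕ} [NeZero n]

lemma fin_eq_cast {n : ℕ} [NeZero n] {v : Fin n} {c : ℕ} (h : v.val = c) (hc : c < n) :
    v = (↑c : Fin n) := by
  apply Fin.ext
  rw [fin_val_cast hc, h]

variable (S : SignedDigraph (Fin n)) (hn : 6 ≤ n) (hadj : S.Adj = F7Adj n)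
include hn

lemma g_val (c : ℕ) (hc : c ≤ n-2) : g S (↑c : Fin n) = d S c := by
  simp only [g]
  rw [fin_val_cast (by omega), if_neg (by omega)]

lemma g_top : g S (↑(n-1) : Fin n) = gl S := by
  simp only [g]
  rw [fin_val_cast (by omega), if_pos rfl]

include hadj

lemma master (h2 : S.SameSignCycles (n-2)) (t : ℕ) :
    ∀ (f : ℕ → Fin n) (u v : Fin n), f 0 = u → f t = v → IsWalk S.Adj t f →
    ∃ N x : ℕ, ((t:ℤ) + (v.val:ℤ) = (u.val:ℤ) + N*((n:ℤ)-1) + x*((n:ℤ)-2)) ∧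
      S.walkSign t f = g S u * g S v * s1 S ^ N * s2 S ^ x := by
  have hn' : (6:ℤ) ≤ (n:ℤ) := by exact_mod_cast hn
  induction t with
  | zero =>
    intro f u v h0 ht hw
    have huv : u = v := by rw [← h0, ← ht]
    subst huv
    refine ⟨0, 0, by push_cast; ring, ?_⟩
    rw [ws_zero, pow_zero, pow_zero, mul_one, mul_one]
    exact (g_sq S hn hadj u).symm
  | succ t ih =>
    intro f u v h0 ht hw
    subst h0
    have hadj0 := hw 0 (Nat.succ_pos t)
    rw [hadj] at hadj0
    simp only [Nat.zero_add] at hadj0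
    obtain ⟨N, x, hlen, hsig⟩ :=
      ih (fun i => f (i+1)) (f 1) v rfl ht (fun i hi => hw (i+1) (by omega))
    have hws := ws_succ' S t f
    rcases hadj0 with ⟨ha, hb⟩ | ⟨ha, hb1, hb2⟩ | ⟨ha, hb⟩ | ⟨ha, hb⟩ | ⟨ha, hb⟩
    · -- 0 → n-2, use arc counted by N
      refine ⟨N+1, x, ?_, ?_⟩
      · have haz : (((f 0).val):ℤ) = 0 := by omega
        have hbz : (((f 1).val):ℤ) = (n:ℤ) - 2 := by omega
        rw [hbz] at hlen
        push_cast
        rw [haz]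
        linarith [hlen]
      · rw [hws, hsig]
        rw [fin_eq_cast ha (by omega), fin_eq_cast hb (by omega)]
        rw [g_val S hn 0 (by omega), g_val S hn (n-2) (by omega), d_zero]
        simp only [s1]
        ring
    · -- descending arc
      refine ⟨N, x, ?_, ?_⟩
      · have haz : (((f 0).val):ℤ) = ((f 1).val:ℤ) + 1 := by omega
        push_cast
        rw [haz]
        linarith [hlen]
      · rw [hws, hsig]
        obtain ⟨j, hj⟩ : ∃ j, (f 1).val = j := ⟨_, rfl⟩
        rw [hj] at ha
        rw [fin_eq_cast ha (by omega : j + 1 < n), fin_eq_cast hj (by omega : j < n)]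
        rw [g_val S hn (j + 1) (by omega), g_val S hn j (by omega)]
        rw [d_succ]
        ring
    · -- 0 → n-3, chord counted by x
      refine ⟨N, x+1, ?_, ?_⟩
      · have haz : (((f 0).val):ℤ) = 0 := by omega
        have hbz : (((f 1).val):ℤ) = (n:ℤ) - 3 := by omega
        rw [hbz] at hlen
        push_cast
        rw [haz]
        linarith [hlen]
      · rw [hws, hsig]
        rw [fin_eq_cast ha (by omega), fin_eq_cast hb (by omega)]
        rw [g_val S hn 0 (by omega), g_val S hn (n-3) (by omega), d_zero]
        simp only [s2]
        ring
    · -- 2 → n-1, jump counted by x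
      refine ⟨N, x+1, ?_, ?_⟩
      · have haz : (((f 0).val):ℤ) = 2 := by omega
        have hbz : (((f 1).val):ℤ) = (n:ℤ) - 1 := by omega
        rw [hbz] at hlen
        push_cast
        rw [haz]
        linarith [hlen]
      · rw [hws, hsig]
        rw [fin_eq_cast ha (by omega), fin_eq_cast hb (by omega)]
        rw [g_val S hn 2 (by omega), g_top S hn]
        have k := keyEq S hn hadj h2
        calc S.sgn (↑(2:ℕ)) (↑(n-1)) * (gl S * g S v * s1 S ^ N * s2 S ^ x)
            = (S.sgn (↑(2:ℕ)) (↑(n-1)) * gl S) * (g S v * s1 S ^ N * s2 S ^ x) := by ring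
          _ = (d S 2 * s2 S) * (g S v * s1 S ^ N * s2 S ^ x) := by rw [k]
          _ = d S 2 * g S v * s1 S ^ N * s2 S ^ (x+1) := by rw [pow_succ]; ring
    · -- n-1 → n-2
      refine ⟨N, x, ?_, ?_⟩
      · have haz : (((f 0).val):ℤ) = (n:ℤ) - 1 := by omega
        have hbz : (((f 1).val):ℤ) = (n:ℤ) - 2 := by omega
        rw [hbz] at hlen
        push_cast
        rw [haz]
        linarith [hlen]
      · rw [hws, hsig]
        rw [fin_eq_cast ha (by omega), fin_eq_cast hb (by omega)]
        rw [g_val S hn (n-2) (by omega), g_top S hn]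
        simp only [gl]
        ring

end S7
namespace S7

lemma neg_one_pow_congr {a b : ℕ} (h : Even a ↔ Even b) : ((-1:ℤ))^a = (-1)^b := by
  rcases Nat.even_or_odd a with ha | ha
  · rw [ha.neg_one_pow, (h.mp ha).neg_one_pow]
  · have hb : Odd b := by
      rcases Nat.even_or_odd b with hb | hb
      · exact absurd (h.mpr hb) (Nat.not_even_iff_odd.mpr ha)
      · exact hb
    rw [ha.neg_one_pow, hb.neg_one_pow]

lemma sign_const_abs (s t : ℤ) (hs : s = 1 ∨ s = -1) (ht : t = 1 ∨ t = -1)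
    (p q : ℕ) (hpq : q + 1 = p)
    (heq : s ^ q = t ^ p) {N x N' x' : ℕ}
    (hA : ((N:ℤ) - N')*(p:ℤ) = ((x':ℤ) - x)*(q:ℤ)) :
    s ^ N * t ^ x = s ^ N' * t ^ x' := by
  rcases hs with e1 | e1 <;> rcases ht with e2 | e2 <;> rw [e1, e2] at heq ⊢
  · simp
  · -- s = 1, t = -1
    simp only [one_pow, one_mul] at heq ⊢
    have hevp : Even p := by
      rcases Nat.even_or_odd p with h | h
      · exact h
      · rw [h.neg_one_pow] at heq; norm_num at heq
    have hoq : Odd q := by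
      rcases Nat.even_or_odd q with h | h
      · exfalso
        have : Odd p := by rw [← hpq]; exact h.add_one
        exact (Nat.not_even_iff_odd.mpr this) hevp
      · exact h
    have h1 : Even (((N:ℤ) - N')*(p:ℤ)) := Even.mul_left ((Int.even_coe_nat p).mpr hevp) _
    rw [hA] at h1
    have h2 : Even ((x':ℤ) - x) := by
      rcases Int.even_mul.mp h1 with h | h
      · exact h
      · exact absurd h (Int.not_even_iff_odd.mpr ((Int.odd_coe_nat q).mpr hoq))
    have h3 : Even x' ↔ Even x := by
      have := Int.even_sub.mp h2
      constructor
      · intro hx; exact (Int.even_coe_nat x).mp (this.mp ((Int.even_coe_nat x').mpr hx))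
      · intro hx; exact (Int.even_coe_nat x').mp (this.mpr ((Int.even_coe_nat x).mpr hx))
    exact neg_one_pow_congr h3.symm
  · -- s = -1, t = 1
    simp only [one_pow, one_mul, mul_one] at heq ⊢
    have hevq : Even q := by
      rcases Nat.even_or_odd q with h | h
      · exact h
      · rw [h.neg_one_pow] at heq; norm_num at heq
    have hop : Odd p := by rw [← hpq]; exact hevq.add_one
    have h1 : Even (((x':ℤ) - x)*(q:ℤ)) := Even.mul_left ((Int.even_coe_nat q).mpr hevq) _
    rw [← hA] at h1
    have h2 : Even ((N:ℤ) - N') := by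
      rcases Int.even_mul.mp h1 with h | h
      · exact h
      · exact absurd h (Int.not_even_iff_odd.mpr ((Int.odd_coe_nat p).mpr hop))
    have h3 : Even N ↔ Even N' := by
      have := Int.even_sub.mp h2
      constructor
      · intro hx; exact (Int.even_coe_nat N').mp (this.mp ((Int.even_coe_nat N).mpr hx))
      · intro hx; exact (Int.even_coe_nat N).mp (this.mpr ((Int.even_coe_nat N').mpr hx))
    exact neg_one_pow_congr h3
  · -- s = -1, t = -1 : impossible since p = q+1
    exfalso
    rcases Nat.even_or_odd q with h | h
    · have hop : Odd p := by rw [← hpq]; exact h.add_one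
      rw [h.neg_one_pow, hop.neg_one_pow] at heq
      norm_num at heq
    · have hevp : Even p := by rw [← hpq]; exact h.add_one
      rw [h.neg_one_pow, hevp.neg_one_pow] at heq
      norm_num at heq

variable {n : ℕ} [NeZero n] (S : SignedDigraph (Fin n)) (hn : 6 ≤ n) (hadj : S.Adj = F7Adj n)
include hn hadj

lemma ne_pow (hpn : S.IsPrimitiveNonpowerful) (h2 : S.SameSignCycles (n-2)) :
    s1 S ^ (n-2) ≠ s2 S ^ (n-1) := by
  intro heq
  obtain ⟨l, hl, hall⟩ := hpn
  obtain ⟨f, f', ⟨hf0, hft, hfw⟩, ⟨hg0, hgt, hgw⟩, hne⟩ :=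
    hall l (le_refl _) (↑(0:ℕ) : Fin n) (↑(0:ℕ) : Fin n)
  obtain ⟨N, x, hlen, hsig⟩ := master S hn hadj h2 l f _ _ hf0 hft hfw
  obtain ⟨N', x', hlen', hsig'⟩ := master S hn hadj h2 l f' _ _ hg0 hgt hgw
  rw [hsig, hsig'] at hne
  apply hne
  have hg0' : g S (↑(0:ℕ) : Fin n) = 1 := by rw [g_val S hn 0 (by omega), d_zero]
  simp only [hg0', one_mul]
  have c1 : ((n-1:ℕ):ℤ) = (n:ℤ)-1 := by omega
  have c2 : ((n-2:ℕ):ℤ) = (n:ℤ)-2 := by omega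
  have hA : ((N:ℤ) - N')*((n-1:ℕ):ℤ) = ((x':ℤ) - x)*((n-2:ℕ):ℤ) := by
    rw [c1, c2]; linarith [hlen, hlen']
  exact sign_const_abs (s1 S) (s2 S)
    (mul_self_eq_one_iff.mp (s1_sq S hn hadj)) (mul_self_eq_one_iff.mp (s2_sq S hn hadj))
    (n-1) (n-2) (by omega) heq hA

lemma pair_ne (hpn : S.IsPrimitiveNonpowerful) (h2 : S.SameSignCycles (n-2))
    (a b : ℕ) (τ : ℤ) (hτ : τ * τ = 1) :
    s1 S ^ (a+(n-2)) * s2 S ^ b * τ ≠ s1 S ^ a * s2 S ^ (b+(n-1)) * τ := by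
  intro h
  have key : (s1 S ^ (n-2) - s2 S ^ (n-1)) * (s1 S ^ a * s2 S ^ b * τ) = 0 := by
    rw [pow_add, pow_add] at h
    linear_combination h
  have hτ0 : τ ≠ 0 := by intro h0; rw [h0] at hτ; norm_num at hτ
  have hs10 : s1 S ≠ 0 := by
    intro h0; have := s1_sq S hn hadj; rw [h0] at this; norm_num at this
  have hs20 : s2 S ≠ 0 := by
    intro h0; have := s2_sq S hn hadj; rw [h0] at this; norm_num at this
  rcases mul_eq_zero.mp key with h' | h'
  · exact ne_pow S hn hadj hpn h2 (sub_eq_zero.mp h')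
  · exact (mul_ne_zero (mul_ne_zero (pow_ne_zero _ hs10) (pow_ne_zero _ hs20)) hτ0) h'

end S7

namespace S7
-- numerical identities, n ≥ 6
lemma frob {n : ℕ} (hn : 6 ≤ n) (c : ℕ) (hc : (n-2)*(n-3) ≤ c) :
    ∃ a b : ℕ, c = a*(n-1) + b*(n-2) := by
  have hdm : (n-2) * (c / (n-2)) + c % (n-2) = c := Nat.div_add_mod c (n-2)
  have hrlt : c % (n-2) < n-2 := Nat.mod_lt _ (by omega)
  have hq : n-3 ≤ c / (n-2) := by
    by_contra hlt
    push_neg at hlt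
    have h1 : c / (n-2) + 1 ≤ n - 3 := by omega
    have h2 : (n-2) * (c / (n-2) + 1) ≤ (n-2)*(n-3) := Nat.mul_le_mul_left _ h1
    have h3 : (n-2) * (c / (n-2) + 1) = (n-2)*(c / (n-2)) + (n-2) := by ring
    omega
  refine ⟨c % (n-2), c / (n-2) - c % (n-2), ?_⟩
  have e1 : (c % (n-2)) * (n-1) = (c % (n-2)) * (n-2) + (c % (n-2)) := by
    rw [show n-1 = (n-2)+1 from by omega, Nat.mul_add, Nat.mul_one]
  have e2 : (c / (n-2) - c % (n-2)) * (n-2) = (c / (n-2))*(n-2) - (c % (n-2))*(n-2) :=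
    Nat.sub_mul _ _ _
  have e3 : (c % (n-2)) * (n-2) ≤ (c / (n-2)) * (n-2) :=
    Nat.mul_le_mul_right _ (by omega)
  have e4 : (n-2) * (c / (n-2)) = (c / (n-2)) * (n-2) := Nat.mul_comm _ _
  omega

section ids
variable {n : ℕ} (hn : 6 ≤ n)
include hn

lemma id1 : (n-1)*(n-2) + (n-2)*(n-3) = 2*(n-2)*(n-2) := by
  obtain ⟨m, rfl⟩ : ∃ m, n = m + 6 := ⟨n-6, by omega⟩
  simp only [show m+6-1 = m+5 from by omega, show m+6-2 = m+4 from by omega,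
    show m+6-3 = m+3 from by omega]
  ring

lemma id2 : (n-3)*(n-1) + (n-1) = (n-1)*(n-2) := by
  obtain ⟨m, rfl⟩ : ∃ m, n = m + 6 := ⟨n-6, by omega⟩
  simp only [show m+6-1 = m+5 from by omega, show m+6-2 = m+4 from by omega,
    show m+6-3 = m+3 from by omega]
  ring

lemma id3 : (n-2)*(n-2) + (n-2) = (n-1)*(n-2) := by
  obtain ⟨m, rfl⟩ : ∃ m, n = m + 6 := ⟨n-6, by omega⟩
  simp only [show m+6-1 = m+5 from by omega, show m+6-2 = m+4 from by omega]
  ring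

lemma id4 : (n-3)*(n-2) + (n-2) + (n-2) = (n-1)*(n-2) := by
  obtain ⟨m, rfl⟩ : ∃ m, n = m + 6 := ⟨n-6, by omega⟩
  simp only [show m+6-1 = m+5 from by omega, show m+6-2 = m+4 from by omega,
    show m+6-3 = m+3 from by omega]
  ring

lemma id5 : (n-3)*(n-1) + (n-2) + ((n-2)*(n-3) + 1) = 2*(n-2)*(n-2) := by
  obtain ⟨m, rfl⟩ : ∃ m, n = m + 6 := ⟨n-6, by omega⟩
  simp only [show m+6-1 = m+5 from by omega, show m+6-2 = m+4 from by omega,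
    show m+6-3 = m+3 from by omega]
  ring

lemma id6 : (n-3)*(n-1) + 1 + ((n-2)*(n-3) + (n-2)) = 2*(n-2)*(n-2) := by
  obtain ⟨m, rfl⟩ : ∃ m, n = m + 6 := ⟨n-6, by omega⟩
  simp only [show m+6-1 = m+5 from by omega, show m+6-2 = m+4 from by omega,
    show m+6-3 = m+3 from by omega]
  ring

lemma idcomm : (n-2)*(n-1) = (n-1)*(n-2) := Nat.mul_comm _ _

end ids

end S7
namespace S7

section moreids
variable {n : ℕ} (hn : 6 ≤ n)
include hn

lemma id7 : (n-3)*(n-2) + (n-2) = (n-3)*(n-1) + 1 := by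
  obtain ⟨m, rfl⟩ : ∃ m, n = m + 6 := ⟨n-6, by omega⟩
  simp only [show m+6-1 = m+5 from by omega, show m+6-2 = m+4 from by omega,
    show m+6-3 = m+3 from by omega]
  ring

lemma id8 : (n-2)*(n-2) + (n-3) = (n-3)*(n-1) + (n-2) := by
  obtain ⟨m, rfl⟩ : ∃ m, n = m + 6 := ⟨n-6, by omega⟩
  simp only [show m+6-1 = m+5 from by omega, show m+6-2 = m+4 from by omega,
    show m+6-3 = m+3 from by omega]
  ring

end moreids

variable {n : ℕ} [NeZero n] (S : SignedDigraph (Fin n)) (hn : 6 ≤ n) (hadj : S.Adj = F7Adj n)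
include hn hadj

lemma sgn_top_eq : s1 S * d S (n-2) = S.sgn (↑(0:ℕ)) (↑(n-2)) := by
  rw [s1, mul_assoc, d_sq S hn hadj (le_refl _), mul_one]

lemma hasSSSD_of_ge (hpn : S.IsPrimitiveNonpowerful) (h2 : S.SameSignCycles (n-2))
    (u v : Fin n) (t : ℕ) (ht : u.val + 2*(n-2)*(n-2) ≤ t) : S.HasSSSD t u v := by
  have hpre := desc_any S hn hadj u
  have hgu2 := g_sq S hn hadj u
  obtain ⟨D, hD⟩ : ∃ D, t = u.val + D := ⟨t - u.val, by omega⟩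
  subst hD
  have hD2 : 2*(n-2)*(n-2) ≤ D := by omega
  suffices h : ∃ σ1 σ2 : ℤ, P S D (↑(0:ℕ)) v σ1 ∧ P S D (↑(0:ℕ)) v σ2 ∧
      g S u * σ1 ≠ g S u * σ2 by
    obtain ⟨σ1, σ2, hP1, hP2, hne⟩ := h
    obtain ⟨f1, h10, h1t, h1w, h1s⟩ := hpre.comp hP1
    obtain ⟨f2, h20, h2t, h2w, h2s⟩ := hpre.comp hP2
    exact ⟨f1, f2, ⟨h10, h1t, h1w⟩, ⟨h20, h2t, h2w⟩, by rw [h1s, h2s]; exact hne⟩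
  have hv4 : v.val = 0 ∨ (1 ≤ v.val ∧ v.val ≤ n-3) ∨ v.val = n-2 ∨ v.val = n-1 := by
    have := v.isLt; omega
  have hid1 := id1 hn
  rcases hv4 with hv | ⟨hv1', hv2'⟩ | hv | hv
  · -- v = 0
    have hveq : v = (↑(0:ℕ) : Fin n) := fin_eq_cast hv (by omega)
    subst hveq
    obtain ⟨a, b, hab⟩ := frob hn (D - (n-1)*(n-2)) (by omega)
    have hab' : D = a*(n-1) + b*(n-2) + (n-1)*(n-2) := by omega
    refine ⟨s1 S ^(a+(n-2)) * s2 S ^ b, s1 S ^ a * s2 S ^(b+(n-1)), ?_, ?_, ?_⟩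
    · have w := (pow1 S hn hadj (a+(n-2))).comp (pow2 S hn hadj b)
      have hlen : (a+(n-2))*(n-1) + b*(n-2) = D := by
        have e := Nat.add_mul a (n-2) (n-1)
        have hc := idcomm (n := n) hn
        omega
      rw [hlen] at w; exact w
    · have w := (pow1 S hn hadj a).comp (pow2 S hn hadj (b+(n-1)))
      have hlen : a*(n-1) + (b+(n-1))*(n-2) = D := by
        have e := Nat.add_mul b (n-1) (n-2)
        omega
      rw [hlen] at w; exact w
    · intro hcon
      apply pair_ne S hn hadj hpn h2 a b (g S u) hgu2
      calc s1 S ^(a+(n-2)) * s2 S ^ b * g S u = g S u * (s1 S ^(a+(n-2)) * s2 S ^ b) := by ring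
        _ = g S u * (s1 S ^ a * s2 S ^(b+(n-1))) := hcon
        _ = s1 S ^ a * s2 S ^(b+(n-1)) * g S u := by ring
  · -- 1 ≤ v ≤ n-3
    have hveq : v = (↑(v.val) : Fin n) := (Fin.cast_val_eq_self v).symm
    obtain ⟨a, b, hab⟩ := frob hn (D + v.val - (n-1)*(n-2)) (by omega)
    have hab' : D + v.val = a*(n-1) + b*(n-2) + (n-1)*(n-2) := by omega
    have hdv := d_sq S hn hadj (show v.val ≤ n-2 by omega)
    have e1 : s1 S ^(a+(n-2)) = s1 S ^(a+(n-3)) * s1 S := by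
      rw [← pow_succ, show a+(n-3)+1 = a+(n-2) from by omega]
    have e2 : s2 S ^(b+(n-1)) = s2 S ^(b+(n-2)) * s2 S := by
      rw [← pow_succ, show b+(n-2)+1 = b+(n-1) from by omega]
    refine ⟨s1 S ^(a+(n-3)) * s2 S ^ b * (s1 S * d S v.val),
            s1 S ^ a * s2 S ^(b+(n-2)) * (s2 S * d S v.val), ?_, ?_, ?_⟩
    · have w := ((pow1 S hn hadj (a+(n-3))).comp (pow2 S hn hadj b)).comp
        (leg1 S hn hadj v.val hv1' (by omega))
      have hlen : (a+(n-3))*(n-1) + b*(n-2) + (n-1-v.val) = D := by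
        have e := Nat.add_mul a (n-3) (n-1)
        have h2' := id2 hn
        omega
      rw [hlen, ← hveq] at w; exact w
    · have w := ((pow1 S hn hadj a).comp (pow2 S hn hadj (b+(n-2)))).comp
        (leg2 S hn hadj v.val (by omega))
      have hlen : a*(n-1) + (b+(n-2))*(n-2) + (n-2-v.val) = D := by
        have e := Nat.add_mul b (n-2) (n-2)
        have h3' := id3 hn
        omega
      rw [hlen, ← hveq] at w; exact w
    · intro hcon
      apply pair_ne S hn hadj hpn h2 a b (g S u * d S v.val)
        (by calc g S u * d S v.val * (g S u * d S v.val)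
              = (g S u * g S u) * (d S v.val * d S v.val) := by ring
            _ = 1 := by rw [hgu2, hdv]; norm_num)
      calc s1 S ^(a+(n-2)) * s2 S ^ b * (g S u * d S v.val)
          = g S u * (s1 S ^(a+(n-3)) * s2 S ^ b * (s1 S * d S v.val)) := by rw [e1]; ring
        _ = g S u * (s1 S ^ a * s2 S ^(b+(n-2)) * (s2 S * d S v.val)) := hcon
        _ = s1 S ^ a * s2 S ^(b+(n-1)) * (g S u * d S v.val) := by rw [e2]; ring
  · -- v = n-2
    have hveq : v = (↑(n-2) : Fin n) := fin_eq_cast hv (by omega)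
    subst hveq
    obtain ⟨a, b, hab⟩ := frob hn (D - (n-3)*(n-1) - 1) (by have := id6 hn; omega)
    have hab' : D = a*(n-1) + b*(n-2) + ((n-3)*(n-1) + 1) := by have := id6 hn; omega
    have hdv := d_sq S hn hadj (le_refl (n-2))
    have e1 : s1 S ^(a+(n-2)) = s1 S ^(a+(n-3)) * s1 S := by
      rw [← pow_succ, show a+(n-3)+1 = a+(n-2) from by omega]
    have e2 : s2 S ^(b+(n-1)) = s2 S ^(b+(n-3)) * s2 S * s2 S := by
      rw [← pow_succ, ← pow_succ, show b+(n-3)+1+1 = b+(n-1) from by omega]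
    have hst := sgn_top_eq S hn hadj
    refine ⟨s1 S ^(a+(n-3)) * s2 S ^ b * S.sgn (↑(0:ℕ)) (↑(n-2)),
            s1 S ^ a * s2 S ^(b+(n-3)) * (s2 S * s2 S * d S (n-2)), ?_, ?_, ?_⟩
    · have w := ((pow1 S hn hadj (a+(n-3))).comp (pow2 S hn hadj b)).comp
        (P.step S (adj_top S hn hadj))
      have hlen : (a+(n-3))*(n-1) + b*(n-2) + 1 = D := by
        have e := Nat.add_mul a (n-3) (n-1)
        omega
      rw [hlen] at w; exact w
    · have w := ((pow1 S hn hadj a).comp (pow2 S hn hadj (b+(n-3)))).comp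
        (leg2' S hn hadj h2)
      have hlen : a*(n-1) + (b+(n-3))*(n-2) + (n-2) = D := by
        have e := Nat.add_mul b (n-3) (n-2)
        have h7' := id7 hn
        omega
      rw [hlen] at w; exact w
    · intro hcon
      apply pair_ne S hn hadj hpn h2 a b (g S u * d S (n-2))
        (by calc g S u * d S (n-2) * (g S u * d S (n-2))
              = (g S u * g S u) * (d S (n-2) * d S (n-2)) := by ring
            _ = 1 := by rw [hgu2, hdv]; norm_num)
      calc s1 S ^(a+(n-2)) * s2 S ^ b * (g S u * d S (n-2))
          = g S u * (s1 S ^(a+(n-3)) * s2 S ^ b * (s1 S * d S (n-2))) := by rw [e1]; ring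
        _ = g S u * (s1 S ^(a+(n-3)) * s2 S ^ b * S.sgn (↑(0:ℕ)) (↑(n-2))) := by rw [hst]
        _ = g S u * (s1 S ^ a * s2 S ^(b+(n-3)) * (s2 S * s2 S * d S (n-2))) := hcon
        _ = s1 S ^ a * s2 S ^(b+(n-1)) * (g S u * d S (n-2)) := by rw [e2]; ring
  · -- v = n-1
    have hveq : v = (↑(n-1) : Fin n) := fin_eq_cast hv (by omega)
    subst hveq
    obtain ⟨a, b, hab⟩ := frob hn (D - (n-3)*(n-1) - (n-2)) (by have := id5 hn; omega)
    have hab' : D = a*(n-1) + b*(n-2) + ((n-3)*(n-1) + (n-2)) := by have := id5 hn; omega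
    have hgl := gl_sq S hn hadj
    have e1 : s1 S ^(a+(n-2)) = s1 S ^(a+(n-3)) * s1 S := by
      rw [← pow_succ, show a+(n-3)+1 = a+(n-2) from by omega]
    have e2 : s2 S ^(b+1) = s2 S ^ b * s2 S := by rw [← pow_succ]
    have e3 : s2 S ^((b+1)+(n-1)) = s2 S ^(b+(n-2)) * s2 S * s2 S := by
      rw [← pow_succ, ← pow_succ, show b+(n-2)+1+1 = (b+1)+(n-1) from by omega]
    refine ⟨s1 S ^(a+(n-3)) * s2 S ^ b * (s1 S * s2 S * gl S),
            s1 S ^ a * s2 S ^(b+(n-2)) * (s2 S * s2 S * gl S), ?_, ?_, ?_⟩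
    · have w := ((pow1 S hn hadj (a+(n-3))).comp (pow2 S hn hadj b)).comp
        (legmix S hn hadj h2)
      have hlen : (a+(n-3))*(n-1) + b*(n-2) + (n-2) = D := by
        have e := Nat.add_mul a (n-3) (n-1)
        omega
      rw [hlen] at w; exact w
    · have w := ((pow1 S hn hadj a).comp (pow2 S hn hadj (b+(n-2)))).comp
        (legpure S hn hadj h2)
      have hlen : a*(n-1) + (b+(n-2))*(n-2) + (n-3) = D := by
        have e := Nat.add_mul b (n-2) (n-2)
        have h8' := id8 hn
        omega
      rw [hlen] at w; exact w
    · intro hcon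
      apply pair_ne S hn hadj hpn h2 a (b+1) (g S u * gl S)
        (by calc g S u * gl S * (g S u * gl S) = (g S u * g S u) * (gl S * gl S) := by ring
            _ = 1 := by rw [hgu2, hgl]; norm_num)
      calc s1 S ^(a+(n-2)) * s2 S ^(b+1) * (g S u * gl S)
          = g S u * (s1 S ^(a+(n-3)) * s2 S ^ b * (s1 S * s2 S * gl S)) := by rw [e1, e2]; ring
        _ = g S u * (s1 S ^ a * s2 S ^(b+(n-2)) * (s2 S * s2 S * gl S)) := hcon
        _ = s1 S ^ a * s2 S ^((b+1)+(n-1)) * (g S u * gl S) := by rw [e3]; ring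

end S7
namespace S7

lemma uniq {n : ℕ} (hn : 6 ≤ n) {N x : ℕ}
    (h : (N:ℤ)*((n:ℤ)-1) + (x:ℤ)*((n:ℤ)-2) = 2*((n:ℤ)-2)^2 - 1) :
    N = n-3 ∧ x = n-2 := by
  have hn' : (6:ℤ) ≤ (n:ℤ) := by exact_mod_cast hn
  have hN0 : (0:ℤ) ≤ (N:ℤ) := Int.natCast_nonneg _
  have hx0 : (0:ℤ) ≤ (x:ℤ) := Int.natCast_nonneg _
  have hT : (N:ℤ) + (x:ℤ) = 2*(n:ℤ) - 5 := by
    by_contra hne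
    rcases lt_or_gt_of_ne hne with hlt | hgt
    · have h1 : (N:ℤ) + (x:ℤ) ≤ 2*(n:ℤ) - 6 := by omega
      have key := mul_le_mul_of_nonneg_right h1 (show (0:ℤ) ≤ (n:ℤ)-1 by linarith)
      nlinarith [key, h, hx0]
    · have h1 : 2*(n:ℤ) - 4 ≤ (N:ℤ) + (x:ℤ) := by omega
      have key := mul_le_mul_of_nonneg_right h1 (show (0:ℤ) ≤ (n:ℤ)-2 by linarith)
      nlinarith [key, h, hN0]
  have hNz : (N:ℤ) = (n:ℤ) - 3 := by linear_combination h - ((n:ℤ)-2)*hT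
  constructor
  · omega
  · omega

variable {n : ℕ} [NeZero n] (S : SignedDigraph (Fin n)) (hn : 6 ≤ n) (hadj : S.Adj = F7Adj n)
include hn hadj

lemma no_sssd (h2 : S.SameSignCycles (n-2)) (u : Fin n) :
    ¬ S.HasSSSD (u.val + 2*((n-2)*(n-2)) - 1) u (↑(0:ℕ)) := by
  rintro ⟨f, f', ⟨hf0, hft, hfw⟩, ⟨hg0, hgt, hgw⟩, hne⟩
  have hK1 : 1*1 ≤ (n-2)*(n-2) := Nat.mul_le_mul (by omega) (by omega)
  have hKz : (((n-2)*(n-2) : ℕ):ℤ) = ((n:ℤ)-2)^2 := by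
    have h2' : ((n-2:ℕ):ℤ) = (n:ℤ)-2 := by omega
    push_cast
    rw [h2']
    ring
  have hval0 : ((↑(0:ℕ) : Fin n)).val = 0 := fin_val_cast (by omega)
  obtain ⟨N, x, hlen, hsig⟩ :=
    master S hn hadj h2 (u.val + 2*((n-2)*(n-2)) - 1) f _ _ hf0 hft hfw
  obtain ⟨N', x', hlen', hsig'⟩ :=
    master S hn hadj h2 (u.val + 2*((n-2)*(n-2)) - 1) f' _ _ hg0 hgt hgw
  have ht0 : ((u.val + 2*((n-2)*(n-2)) - 1 : ℕ) : ℤ)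
      = (u.val:ℤ) + 2*(((n-2)*(n-2):ℕ):ℤ) - 1 := by omega
  have hv0 : (((↑(0:ℕ) : Fin n)).val : ℤ) = 0 := by rw [hval0]; norm_num
  have hNx : (N:ℤ)*((n:ℤ)-1) + (x:ℤ)*((n:ℤ)-2) = 2*((n:ℤ)-2)^2 - 1 := by
    rw [ht0, hv0, hKz] at hlen
    linarith [hlen]
  have hNx' : (N':ℤ)*((n:ℤ)-1) + (x':ℤ)*((n:ℤ)-2) = 2*((n:ℤ)-2)^2 - 1 := by
    rw [ht0, hv0, hKz] at hlen'
    linarith [hlen']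
  obtain ⟨hN, hx⟩ := uniq hn hNx
  obtain ⟨hN', hx'⟩ := uniq hn hNx'
  apply hne
  rw [hsig, hsig', hN, hx, hN', hx']

lemma localBase_eq (hpn : S.IsPrimitiveNonpowerful) (h2 : S.SameSignCycles (n-2)) (u : Fin n) :
    S.localBase u = u.val + 2*((n-2)*(n-2)) := by
  have hK1 : 1*1 ≤ (n-2)*(n-2) := Nat.mul_le_mul (by omega) (by omega)
  have hassoc : 2*((n-2)*(n-2)) = 2*(n-2)*(n-2) := (mul_assoc 2 _ _).symm
  have hmem : (u.val + 2*((n-2)*(n-2))) ∈ {l : ℕ | ∀ t ≥ l, ∀ v : Fin n, S.HasSSSD t u v} := by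
    intro t ht v
    exact hasSSSD_of_ge S hn hadj hpn h2 u v t (by omega)
  rw [SignedDigraph.localBase]
  apply le_antisymm
  · exact Nat.sInf_le hmem
  · by_contra hlt
    push_neg at hlt
    have hnemp : {l : ℕ | ∀ t ≥ l, ∀ v : Fin n, S.HasSSSD t u v}.Nonempty := ⟨_, hmem⟩
    have hImem := Nat.sInf_mem hnemp
    have hss := hImem (u.val + 2*((n-2)*(n-2)) - 1) (by omega) (↑(0:ℕ))
    exact no_sssd S hn hadj h2 u hss

end S7
namespace S7

lemma kth {n : ℕ} (C k : ℕ) (hk1 : 1 ≤ k) (hk2 : k ≤ n) (f : Fin n → ℕ)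
    (hf : ∀ v, f v = v.val + C) : kthSmallest f k = (k-1) + C := by
  have hfe : f = (fun j => j + C) ∘ Fin.val := funext hf
  have hL : (Finset.univ : Finset (Fin n)).val.map f
      = ((List.map (fun j => j + C) (List.range n) : List ℕ) : Multiset ℕ) := by
    rw [Fin.univ_def]
    show Multiset.map f ↑(List.finRange n) = _
    rw [Multiset.map_coe, hfe, ← List.map_map, (show List.map Fin.val (List.finRange n) = List.range n from
      List.ext_getElem (by simp) (by simp))]
  have hSorted : List.Pairwise (· ≤ ·) (List.map (fun j => j + C) (List.range n)) := by
    rw [List.pairwise_map]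
    exact (List.pairwise_lt_range (n := n)).imp (fun h => by omega)
  have hsort : Multiset.sort ((Finset.univ : Finset (Fin n)).val.map f) (· ≤ ·)
      = List.map (fun j => j + C) (List.range n) := by
    apply List.Perm.eq_of_pairwise' (Multiset.pairwise_sort _ _) hSorted
    rw [← Multiset.coe_eq_coe, Multiset.sort_eq, hL]
  rw [kthSmallest, hsort]
  have hlen : k - 1 < (List.map (fun j => j + C) (List.range n)).length := by
    simp only [List.length_map, List.length_range]
    omega
  rw [List.getD_eq_getElem _ _ hlen, List.getElem_map, List.getElem_range]

lemma hCeq {n : ℕ} (hn : 6 ≤ n) : 2*((n-2)*(n-2)) = 2*n^2 - 8*n + 8 := by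
  obtain ⟨m, rfl⟩ : ∃ m, n = m + 6 := ⟨n-6, by omega⟩
  simp only [show m+6-2 = m+4 from by omega]
  have e1 : (m+4)*(m+4) = m*m+8*m+16 := by ring
  have e2 : (m+6)^2 = m*m+12*m+36 := by ring
  rw [e1, e2]
  set q := m*m with hq
  omega

end S7
/-- Let `n ≥ 6` and let `𝒮₇` be a primitive nonpowerful signed
digraph with underlying digraph `F₇`, in which all cycles of length `n-1` have
the same sign and all cycles of length `n-2` have the same sign. Then
`l(k) = l(v_k) = 2n²-8n+7+k` for every `1 ≤ k ≤ n`. -/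
theorem stmt7 (n : ℕ) (hn : 6 ≤ n)
    (S : SignedDigraph (Fin n)) (hadj : S.Adj = F7Adj n)
    (hpn : S.IsPrimitiveNonpowerful)
    (h1 : S.SameSignCycles (n - 1)) (h2 : S.SameSignCycles (n - 2)) :
    ∀ k : ℕ, ∀ _hk1 : 1 ≤ k, ∀ _hk2 : k ≤ n,
      kthSmallest S.localBase k = S.localBase ⟨k - 1, by omega⟩ ∧
      S.localBase ⟨k - 1, by omega⟩ = 2 * n ^ 2 - 8 * n + 7 + k := by
  haveI : NeZero n := ⟨by omega⟩
  intro k hk1 hk2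
  have hlb : ∀ u : Fin n, S.localBase u = u.val + 2*((n-2)*(n-2)) :=
    fun u => S7.localBase_eq S hn hadj hpn h2 u
  have hC := S7.hCeq hn
  constructor
  · rw [S7.kth (2*((n-2)*(n-2))) k hk1 hk2 S.localBase hlb, hlb ⟨k-1, by omega⟩]
  · rw [hlb ⟨k-1, by omega⟩]
    show (k-1) + 2*((n-2)*(n-2)) = 2*n^2 - 8*n + 7 + k
    omega
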